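/- arXiv:2602.12273 — 5 statements merged into one kernel-verified Lean document; each statement's English description precedes it below -/
import Mathlib

section
/- Let U, Y be real Hilbert spaces, S : U → Y a bounded linear operator with adjoint S*, N : U → U bounded linear self-adjoint with ⟨Nu,u⟩ ≥ c₀‖u‖² (c₀ > 0), and θ : U → ℝ ∪ {+∞} convex, lower semicontinuous, proper. For z ∈ Y, define T₀(z) = u* where (u*, p*) is the unique solution of the system 0 ∈ Nu* + ∂θ(u*) + S*p*, 0 = Su* − p* + z. Then T₀ is Lipschitz continuous with Lipschitz constant c₀⁻¹‖S‖. -/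
open MeasureTheory RealInnerProductSpace

noncomputable section

/-- The convex subdifferential of an extended-real-valued function `θ` at `u`. -/
def subdiff {U : Type*} [NormedAddCommGroup U] [InnerProductSpace ℝ U]
    (θ : U → EReal) (u : U) : Set U :=
  {g | ∀ v : U, θ u + ((⟪g, v - u⟫ : ℝ) : EReal) ≤ θ v}

/-- the map `T₀ : z ↦ u*`, where `(u*, p*)` is the (unique) solution of
`0 ∈ Nu* + ∂θ(u*) + S*p*`, `0 = Su* − p* + z`, is Lipschitz with constant `c₀⁻¹‖S‖`. -/
theorem stmt1
    {U Y : Type*} [NormedAddCommGroup U] [InnerProductSpace ℝ U] [CompleteSpace U]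
    [NormedAddCommGroup Y] [InnerProductSpace ℝ Y] [CompleteSpace Y]
    (S : U →L[ℝ] Y)
    (N : U →L[ℝ] U) (hNsa : ∀ u v : U, ⟪N u, v⟫ = ⟪u, N v⟫)
    (c₀ : ℝ) (hc₀ : 0 < c₀) (hcoer : ∀ u : U, c₀ * ‖u‖ ^ 2 ≤ ⟪N u, u⟫)
    (θ : U → EReal)
    (hconv : ∀ u v : U, ∀ t : ℝ, 0 ≤ t → t ≤ 1 →
      θ (t • u + (1 - t) • v) ≤ (t : EReal) * θ u + ((1 - t : ℝ) : EReal) * θ v)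
    (hlsc : LowerSemicontinuous θ)
    (hne_bot : ∀ u : U, θ u ≠ ⊥) (hproper : ∃ u : U, θ u ≠ ⊤) :
    ∀ (z₁ z₂ : Y) (u₁ u₂ : U) (p₁ p₂ : Y),
      (-(N u₁) - (ContinuousLinearMap.adjoint S) p₁ ∈ subdiff θ u₁) →
      S u₁ - p₁ + z₁ = 0 →
      (-(N u₂) - (ContinuousLinearMap.adjoint S) p₂ ∈ subdiff θ u₂) →
      S u₂ - p₂ + z₂ = 0 →
      ‖u₁ - u₂‖ ≤ c₀⁻¹ * ‖S‖ * ‖z₁ - z₂‖ := by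
  intro z₁ z₂ u₁ u₂ p₁ p₂ h₁ hS₁ h₂ hS₂
  obtain ⟨v₀, hv₀⟩ := hproper
  -- finiteness of θ at points with nonempty subdifferential
  have hfin : ∀ (u g : U), g ∈ subdiff θ u → θ u ≠ ⊤ := by
    intro u g hg hT
    have h := hg v₀
    rw [hT, EReal.top_add_coe] at h
    exact hv₀ (top_le_iff.mp h)
  have h1t := hfin u₁ _ h₁
  have h2t := hfin u₂ _ h₂
  have ha : θ u₁ = ((θ u₁).toReal : EReal) := (EReal.coe_toReal h1t (hne_bot u₁)).symm
  have hb : θ u₂ = ((θ u₂).toReal : EReal) := (EReal.coe_toReal h2t (hne_bot u₂)).symm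
  set a := (θ u₁).toReal
  set b := (θ u₂).toReal
  have k₁ := h₁ u₂
  have k₂ := h₂ u₁
  rw [ha, hb, ← EReal.coe_add, EReal.coe_le_coe_iff] at k₁ k₂
  -- monotonicity of the subdifferential
  have hmono : (0:ℝ) ≤ ⟪(-(N u₁) - (ContinuousLinearMap.adjoint S) p₁)
      - (-(N u₂) - (ContinuousLinearMap.adjoint S) p₂), u₁ - u₂⟫ := by
    have e₁ : ⟪-(N u₁) - (ContinuousLinearMap.adjoint S) p₁, u₂ - u₁⟫
        = -⟪-(N u₁) - (ContinuousLinearMap.adjoint S) p₁, u₁ - u₂⟫ := by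
      rw [← inner_neg_right]; congr 1; abel
    rw [inner_sub_left]
    rw [e₁] at k₁
    linarith
  -- p₁ - p₂ = S (u₁ - u₂) + (z₁ - z₂)
  have hp₁ : p₁ = S u₁ + z₁ := by
    have h := hS₁; rw [sub_add_eq_add_sub, sub_eq_zero] at h; exact h.symm
  have hp₂ : p₂ = S u₂ + z₂ := by
    have h := hS₂; rw [sub_add_eq_add_sub, sub_eq_zero] at h; exact h.symm
  have hp : p₁ - p₂ = S (u₁ - u₂) + (z₁ - z₂) := by
    rw [hp₁, hp₂, map_sub]; abel
  set d := u₁ - u₂ with hd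
  set w := z₁ - z₂ with hw
  -- rewrite the monotonicity inequality
  have key : ⟪N d, d⟫ ≤ -(‖S d‖ ^ 2) - ⟪w, S d⟫ := by
    have e : (-(N u₁) - (ContinuousLinearMap.adjoint S) p₁)
        - (-(N u₂) - (ContinuousLinearMap.adjoint S) p₂)
        = -(N d) - (ContinuousLinearMap.adjoint S) (p₁ - p₂) := by
      simp only [hd, map_sub]; abel
    rw [e, sub_eq_add_neg, inner_add_left, inner_neg_left, inner_neg_left,
      ContinuousLinearMap.adjoint_inner_left, hp, inner_add_left,
      real_inner_self_eq_norm_sq] at hmono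
    linarith
  have hcd := hcoer d
  have hSd : ‖S d‖ ≤ ‖S‖ * ‖d‖ := S.le_opNorm d
  have hinner : -⟪w, S d⟫ ≤ ‖w‖ * ‖S d‖ := by
    calc -⟪w, S d⟫ ≤ |⟪w, S d⟫| := neg_le_abs _
    _ ≤ ‖w‖ * ‖S d‖ := abs_real_inner_le_norm _ _
  have hmain : c₀ * ‖d‖ ^ 2 ≤ ‖w‖ * (‖S‖ * ‖d‖) := by
    have hSd2 : (0:ℝ) ≤ ‖S d‖ ^ 2 := sq_nonneg _
    nlinarith [norm_nonneg w, norm_nonneg (S d)]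
  rcases eq_or_lt_of_le (norm_nonneg d) with h0 | h0
  · rw [← h0]
    positivity
  · have hinv := mul_inv_cancel₀ hc₀.ne'
    nlinarith [norm_nonneg w, norm_nonneg S, inv_nonneg.mpr hc₀.le]
end
end

section
/- Let U, Y be real Hilbert spaces, S : U → Y bounded linear, N : U → U bounded linear self-adjoint with ⟨Nu,u⟩ ≥ c₀‖u‖², θ : U → ℝ ∪ {+∞} convex, lower semicontinuous, proper, and fix b ∈ Y. Define the set-valued mapping φ : U × Y ⇉ U × Y by φ(u, p) = (Nu + ∂θ(u) + S*p) × {−Su + p − b}. Then there exists a constant κ₀ > 0 such that for all w₁, w₂ ∈ U × Y and all ζ₁ ∈ φ(w₁), ζ₂ ∈ φ(w₂), one has ‖w₁ − w₂‖ ≤ κ₀‖ζ₁ − ζ₂‖; that is, κ₀ · dist(φ(w₁), φ(w₂)) ≥ ‖w₁ − w₂‖. -/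
open MeasureTheory RealInnerProductSpace

noncomputable section

/-- the set-valued optimality mapping
`φ(u, p) = (Nu + ∂θ(u) + S*p) × {−Su + p − b}` on `U × Y` is globally metrically
subregular: there is `κ₀ > 0` such that `‖w₁ − w₂‖ ≤ κ₀ ‖ζ₁ − ζ₂‖` whenever
`ζᵢ ∈ φ(wᵢ)`.  The product norm is the Hilbert norm
`‖(u,p)‖² = ‖u‖² + ‖p‖²`, so the inequality is stated in squared form. -/
theorem stmt2
    {U Y : Type*} [NormedAddCommGroup U] [InnerProductSpace ℝ U] [CompleteSpace U]
    [NormedAddCommGroup Y] [InnerProductSpace ℝ Y] [CompleteSpace Y]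
    (S : U →L[ℝ] Y)
    (N : U →L[ℝ] U) (hNsa : ∀ u v : U, ⟪N u, v⟫ = ⟪u, N v⟫)
    (c₀ : ℝ) (hc₀ : 0 < c₀) (hcoer : ∀ u : U, c₀ * ‖u‖ ^ 2 ≤ ⟪N u, u⟫)
    (θ : U → EReal)
    (hconv : ∀ u v : U, ∀ t : ℝ, 0 ≤ t → t ≤ 1 →
      θ (t • u + (1 - t) • v) ≤ (t : EReal) * θ u + ((1 - t : ℝ) : EReal) * θ v)
    (hlsc : LowerSemicontinuous θ)
    (hne_bot : ∀ u : U, θ u ≠ ⊥) (hproper : ∃ u : U, θ u ≠ ⊤)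
    (b : Y) :
    ∃ κ₀ : ℝ, 0 < κ₀ ∧
      ∀ (u₁ u₂ : U) (p₁ p₂ : Y) (ξ₁ ξ₂ : U) (η₁ η₂ : Y),
        (ξ₁ - N u₁ - (ContinuousLinearMap.adjoint S) p₁ ∈ subdiff θ u₁) →
        η₁ = -(S u₁) + p₁ - b →
        (ξ₂ - N u₂ - (ContinuousLinearMap.adjoint S) p₂ ∈ subdiff θ u₂) →
        η₂ = -(S u₂) + p₂ - b →
        ‖u₁ - u₂‖ ^ 2 + ‖p₁ - p₂‖ ^ 2 ≤ κ₀ ^ 2 * (‖ξ₁ - ξ₂‖ ^ 2 + ‖η₁ - η₂‖ ^ 2) := by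
  classical
  set m : ℝ := min c₀ 1 with hm_def
  have hm : 0 < m := lt_min hc₀ one_pos
  refine ⟨1 / m, by positivity, ?_⟩
  intro u₁ u₂ p₁ p₂ ξ₁ ξ₂ η₁ η₂ h1 hη₁ h2 hη₂
  obtain ⟨v₀, hv₀⟩ := hproper
  set g₁ : U := ξ₁ - N u₁ - (ContinuousLinearMap.adjoint S) p₁ with hg₁
  set g₂ : U := ξ₂ - N u₂ - (ContinuousLinearMap.adjoint S) p₂ with hg₂
  -- θ is finite at u₁, u₂
  have ht1 : θ u₁ ≠ ⊤ := by
    intro h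
    have := h1 v₀
    rw [h] at this
    rw [EReal.top_add_of_ne_bot (EReal.coe_ne_bot _)] at this
    exact hv₀ (top_le_iff.mp this)
  have ht2 : θ u₂ ≠ ⊤ := by
    intro h
    have := h2 v₀
    rw [h] at this
    rw [EReal.top_add_of_ne_bot (EReal.coe_ne_bot _)] at this
    exact hv₀ (top_le_iff.mp this)
  have ha₁ : θ u₁ = ((θ u₁).toReal : EReal) := (EReal.coe_toReal ht1 (hne_bot u₁)).symm
  have ha₂ : θ u₂ = ((θ u₂).toReal : EReal) := (EReal.coe_toReal ht2 (hne_bot u₂)).symm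
  -- monotonicity of the subdifferential
  have m1 : (θ u₁).toReal + ⟪g₁, u₂ - u₁⟫ ≤ (θ u₂).toReal := by
    have := h1 u₂
    rw [ha₁, ha₂, ← EReal.coe_add] at this
    exact_mod_cast this
  have m2 : (θ u₂).toReal + ⟪g₂, u₁ - u₂⟫ ≤ (θ u₁).toReal := by
    have := h2 u₁
    rw [ha₁, ha₂, ← EReal.coe_add] at this
    exact_mod_cast this
  have mono : 0 ≤ ⟪g₁ - g₂, u₁ - u₂⟫ := by
    have e1 : ⟪g₁, u₂ - u₁⟫ = -⟪g₁, u₁ - u₂⟫ := by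
      rw [← inner_neg_right]; congr 1; abel
    rw [inner_sub_left]
    rw [e1] at m1
    linarith
  -- algebraic identities
  have hξ : ξ₁ - ξ₂ = N (u₁ - u₂) + (ContinuousLinearMap.adjoint S) (p₁ - p₂) + (g₁ - g₂) := by
    rw [hg₁, hg₂, map_sub, map_sub]; abel
  have hSdu : S (u₁ - u₂) = (p₁ - p₂) - (η₁ - η₂) := by
    rw [hη₁, hη₂, map_sub]; abel
  have hadj : ⟪(ContinuousLinearMap.adjoint S) (p₁ - p₂), u₁ - u₂⟫
      = ⟪p₁ - p₂, S (u₁ - u₂)⟫ := ContinuousLinearMap.adjoint_inner_left S _ _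
  have hinner : ⟪ξ₁ - ξ₂, u₁ - u₂⟫
      = ⟪N (u₁ - u₂), u₁ - u₂⟫ + (‖p₁ - p₂‖ ^ 2 - ⟪p₁ - p₂, η₁ - η₂⟫)
        + ⟪g₁ - g₂, u₁ - u₂⟫ := by
    rw [hξ, inner_add_left, inner_add_left, hadj, hSdu,
      inner_sub_right (𝕜 := ℝ) (p₁ - p₂) (p₁ - p₂) (η₁ - η₂), real_inner_self_eq_norm_sq]
  -- key coercivity estimate
  have key : c₀ * ‖u₁ - u₂‖ ^ 2 + ‖p₁ - p₂‖ ^ 2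
      ≤ ⟪ξ₁ - ξ₂, u₁ - u₂⟫ + ⟪p₁ - p₂, η₁ - η₂⟫ := by
    have := hcoer (u₁ - u₂)
    rw [hinner]; linarith
  -- Cauchy–Schwarz bounds
  have cs1 : ⟪ξ₁ - ξ₂, u₁ - u₂⟫ ≤ ‖ξ₁ - ξ₂‖ * ‖u₁ - u₂‖ := real_inner_le_norm _ _
  have cs2 : ⟪p₁ - p₂, η₁ - η₂⟫ ≤ ‖p₁ - p₂‖ * ‖η₁ - η₂‖ := real_inner_le_norm _ _
  have hmc : m ≤ c₀ := min_le_left _ _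
  have hm1 : m ≤ 1 := min_le_right _ _
  have h3 : m * (‖u₁ - u₂‖ ^ 2 + ‖p₁ - p₂‖ ^ 2)
      ≤ ‖ξ₁ - ξ₂‖ * ‖u₁ - u₂‖ + ‖p₁ - p₂‖ * ‖η₁ - η₂‖ := by
    nlinarith [sq_nonneg ‖u₁ - u₂‖, sq_nonneg ‖p₁ - p₂‖]
  have hfin : m ^ 2 * (‖u₁ - u₂‖ ^ 2 + ‖p₁ - p₂‖ ^ 2) ≤ ‖ξ₁ - ξ₂‖ ^ 2 + ‖η₁ - η₂‖ ^ 2 := by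
    nlinarith [mul_le_mul_of_nonneg_left h3 hm.le, sq_nonneg (m * ‖u₁ - u₂‖ - ‖ξ₁ - ξ₂‖),
      sq_nonneg (m * ‖p₁ - p₂‖ - ‖η₁ - η₂‖)]
  have hm2 : (0 : ℝ) < m ^ 2 := by positivity
  rw [div_pow, one_pow, div_mul_eq_mul_div, le_div_iff₀ hm2]
  linarith
end
end

section
/- Let U, Y be real Hilbert spaces, S : U → Y bounded linear, N : U → U bounded linear self-adjoint coercive with constant c₀ > 0, θ convex lsc proper on U, and b ∈ Y. Let Q_A : U → U and Q_S : Y → Y be bounded linear self-adjoint operators such that Q_A − N and Q_S − (I + S N⁻¹ S*) are positive semidefinite. Let w* = (u*, p*) be the solution of 0 ∈ Nu* + ∂θ(u*) + S*p*, 0 = Su* − p* + b. Define, for given (u^k, p^k), the exact inexact-Uzawa update ū^{k+1} = (Q_A + ∂θ)⁻¹((Q_A − N)u^k − S*p^k), p̄^{k+1} = p^k + Q_S⁻¹(S ū^{k+1} − p^k + b). Then with Q(u,p) = ((Q_A − N)u, Q_S p) and R(u,p) = ((Q_A − N)u, (Q_S − (1/2)(I + S N⁻¹ S*))p), one has the contraction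 inequality ‖w̄^{k+1} − w*‖_Q² ≤ ‖w^k − w*‖_Q² − ‖w̄^{k+1} − w^k‖_R², where ‖w‖_Q² = ⟨Qw, w⟩ and ‖w‖_R² = ⟨Rw, w⟩. -/
open MeasureTheory RealInnerProductSpace

noncomputable section

lemma subdiff_mono {U : Type*} [NormedAddCommGroup U] [InnerProductSpace ℝ U]
    (θ : U → EReal) (hne_bot : ∀ u : U, θ u ≠ ⊥) (hproper : ∃ u : U, θ u ≠ ⊤)
    {g1 g2 x y : U} (h1 : g1 ∈ subdiff θ x) (h2 : g2 ∈ subdiff θ y) :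
    0 ≤ (⟪g1 - g2, x - y⟫ : ℝ) := by
  obtain ⟨v0, hv0⟩ := hproper
  have hxt : θ x ≠ ⊤ := by
    intro h
    have h' := h1 v0
    rw [h, EReal.top_add_of_ne_bot (EReal.coe_ne_bot _)] at h'
    exact hv0 (top_le_iff.mp h')
  have hyt : θ y ≠ ⊤ := by
    intro h
    have h' := h2 v0
    rw [h, EReal.top_add_of_ne_bot (EReal.coe_ne_bot _)] at h'
    exact hv0 (top_le_iff.mp h')
  obtain ⟨a, ha⟩ : ∃ a : ℝ, θ x = (a : EReal) := ⟨(θ x).toReal, (EReal.coe_toReal hxt (hne_bot x)).symm⟩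
  obtain ⟨c, hc⟩ : ∃ c : ℝ, θ y = (c : EReal) := ⟨(θ y).toReal, (EReal.coe_toReal hyt (hne_bot y)).symm⟩
  have e1 := h1 y
  have e2 := h2 x
  rw [ha, hc] at e1 e2
  have e1' : a + ⟪g1, y - x⟫ ≤ c := by exact_mod_cast e1
  have e2' : c + ⟪g2, x - y⟫ ≤ a := by exact_mod_cast e2
  have hs : ⟪g1, y - x⟫ = -⟪g1, x - y⟫ := by
    rw [← inner_neg_right, neg_sub]
  rw [inner_sub_left]
  linarith [e1', e2', hs]

/-- contraction inequality for one exact step of the inexact Uzawa method: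
`‖w̄^{k+1} − w*‖_Q² ≤ ‖w^k − w*‖_Q² − ‖w̄^{k+1} − w^k‖_R²`, where
`‖(u,p)‖_Q² = ⟨(Q_A − N)u, u⟩ + ⟨Q_S p, p⟩` and
`‖(u,p)‖_R² = ⟨(Q_A − N)u, u⟩ + ⟨(Q_S − ½(I + S N⁻¹ S*)) p, p⟩`. -/
theorem stmt3
    {U Y : Type*} [NormedAddCommGroup U] [InnerProductSpace ℝ U] [CompleteSpace U]
    [NormedAddCommGroup Y] [InnerProductSpace ℝ Y] [CompleteSpace Y]
    (S : U →L[ℝ] Y)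
    (N : U →L[ℝ] U) (hNsa : ∀ u v : U, ⟪N u, v⟫ = ⟪u, N v⟫)
    (c₀ : ℝ) (hc₀ : 0 < c₀) (hcoer : ∀ u : U, c₀ * ‖u‖ ^ 2 ≤ ⟪N u, u⟫)
    (Ninv : U →L[ℝ] U) (hNinv₁ : ∀ u, N (Ninv u) = u) (hNinv₂ : ∀ u, Ninv (N u) = u)
    (θ : U → EReal)
    (hconv : ∀ u v : U, ∀ t : ℝ, 0 ≤ t → t ≤ 1 →
      θ (t • u + (1 - t) • v) ≤ (t : EReal) * θ u + ((1 - t : ℝ) : EReal) * θ v)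
    (hlsc : LowerSemicontinuous θ)
    (hne_bot : ∀ u : U, θ u ≠ ⊥) (hproper : ∃ u : U, θ u ≠ ⊤)
    (b : Y)
    (QA : U →L[ℝ] U) (hQAsa : ∀ u v : U, ⟪QA u, v⟫ = ⟪u, QA v⟫)
    (hQA_psd : ∀ u : U, 0 ≤ ⟪QA u - N u, u⟫)
    (QS : Y →L[ℝ] Y) (hQSsa : ∀ p q : Y, ⟪QS p, q⟫ = ⟪p, QS q⟫)
    (hQS_psd : ∀ p : Y,
      0 ≤ ⟪QS p - (p + S (Ninv ((ContinuousLinearMap.adjoint S) p))), p⟫)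
    (QSinv : Y →L[ℝ] Y) (hQSinv₁ : ∀ p, QS (QSinv p) = p) (hQSinv₂ : ∀ p, QSinv (QS p) = p)
    -- the saddle point `w* = (u*, p*)`
    (ustar : U) (pstar : Y)
    (hustar : -(N ustar) - (ContinuousLinearMap.adjoint S) pstar ∈ subdiff θ ustar)
    (hpstar : S ustar - pstar + b = 0)
    -- the current iterate `w^k = (u, p)` and the exact update `w̄^{k+1} = (ubar, pbar)`
    (u ubar : U) (p pbar : Y)
    (hubar : (QA u - N u) - (ContinuousLinearMap.adjoint S) p - QA ubar ∈ subdiff θ ubar)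
    (hpbar : pbar = p + QSinv (S ubar - p + b)) :
    ⟪QA (ubar - ustar) - N (ubar - ustar), ubar - ustar⟫
        + ⟪QS (pbar - pstar), pbar - pstar⟫
      ≤ (⟪QA (u - ustar) - N (u - ustar), u - ustar⟫
          + ⟪QS (p - pstar), p - pstar⟫)
        - (⟪QA (ubar - u) - N (ubar - u), ubar - u⟫
            + (⟪QS (pbar - p), pbar - p⟫
              - (1 / 2) * (‖pbar - p‖ ^ 2
                + ⟪S (Ninv ((ContinuousLinearMap.adjoint S) (pbar - p))), pbar - p⟫))) := by
  have F1 : (0:ℝ) ≤ ⟪((QA u - N u) - (ContinuousLinearMap.adjoint S) p - QA ubar)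
      - (-(N ustar) - (ContinuousLinearMap.adjoint S) pstar), ubar - ustar⟫ :=
    subdiff_mono θ hne_bot hproper hubar hustar
  set eu := ubar - ustar with heu
  set du := ubar - u with hdu
  set ep := pbar - pstar with hep
  set dp := pbar - p with hdp
  have hu' : u - ustar = eu - du := by rw [heu, hdu]; abel
  have hp' : p - pstar = ep - dp := by rw [hep, hdp]; abel
  rw [hu', hp']
  -- rewrite the subgradient difference
  have hdiff : ((QA u - N u) - (ContinuousLinearMap.adjoint S) p - QA ubar)
      - (-(N ustar) - (ContinuousLinearMap.adjoint S) pstar)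
      = -(QA du) - N eu + N du
        - (ContinuousLinearMap.adjoint S) ep + (ContinuousLinearMap.adjoint S) dp := by
    rw [heu, hdu, hep, hdp]
    simp only [map_sub]
    abel
  rw [hdiff] at F1
  have adjL : ∀ (q : Y) (x : U), ⟪(ContinuousLinearMap.adjoint S) q, x⟫ = ⟪S x, q⟫ := by
    intro q x
    rw [ContinuousLinearMap.adjoint_inner_left]
    exact real_inner_comm _ _
  have F1' : (0:ℝ) ≤ -⟪QA du, eu⟫ - ⟪N eu, eu⟫ + ⟪N du, eu⟫ - ⟪S eu, ep⟫ + ⟪S eu, dp⟫ := by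
    simpa only [inner_sub_left, inner_add_left, inner_neg_left, adjL] using F1
  -- the QS equation
  have F2 : QS dp = S eu - (ep - dp) := by
    have h1 : dp = QSinv (S ubar - p + b) := by rw [hdp, hpbar, add_sub_cancel_left]
    have h2 : S ustar = pstar - b := by
      have h := hpstar
      rw [sub_add_eq_add_sub, sub_eq_zero] at h
      exact eq_sub_of_add_eq h
    have key : QS dp = S ubar - p + b := by rw [h1, hQSinv₁]
    rw [key, heu, hep, hdp, map_sub, h2]
    abel
  have sQA : ⟪QA du, eu⟫ = ⟪QA eu, du⟫ := by rw [hQAsa]; exact real_inner_comm _ _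
  have sN : ⟪N du, eu⟫ = ⟪N eu, du⟫ := by rw [hNsa]; exact real_inner_comm _ _
  have sQS : ⟪QS dp, ep⟫ = ⟪QS ep, dp⟫ := by rw [hQSsa]; exact real_inner_comm _ _
  have E1 : ⟪QS ep, dp⟫ = ⟪S eu, ep⟫ - ⟪ep, ep⟫ + ⟪ep, dp⟫ := by
    rw [← sQS, F2]
    simp only [inner_sub_left]
    have : ⟪dp, ep⟫ = ⟪ep, dp⟫ := real_inner_comm _ _
    have h' : ⟪S eu, ep⟫ = ⟪S eu, ep⟫ := rfl
    linarith [this]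
  -- square completion in U
  have h3 : (0:ℝ) ≤ ⟪N eu, eu⟫ - ⟪S eu, dp⟫
      + (1/4) * ⟪S (Ninv ((ContinuousLinearMap.adjoint S) dp)), dp⟫ := by
    set w := Ninv ((ContinuousLinearMap.adjoint S) dp) with hw
    have hz : (0:ℝ) ≤ ⟪N (eu - (1/2 : ℝ) • w), eu - (1/2 : ℝ) • w⟫ := by
      refine le_trans ?_ (hcoer _)
      positivity
    have a1 : ⟪N eu, w⟫ = ⟪S eu, dp⟫ := by
      rw [hNsa, hw, hNinv₁, ContinuousLinearMap.adjoint_inner_right]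
    have a2 : ⟪N w, eu⟫ = ⟪S eu, dp⟫ := by
      rw [hw, hNinv₁, adjL]
    have a3 : ⟪N w, w⟫ = ⟪S w, dp⟫ := by
      rw [hw, hNinv₁, adjL]
    have hexp : ⟪N (eu - (1/2 : ℝ) • w), eu - (1/2 : ℝ) • w⟫
        = ⟪N eu, eu⟫ - ⟪S eu, dp⟫ + (1/4) * ⟪S w, dp⟫ := by
      simp only [map_sub, _root_.map_smul, inner_sub_left, inner_sub_right,
        real_inner_smul_left, real_inner_smul_right, a1, a2, a3]
      ring
    rw [hexp] at hz
    exact hz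
  -- square completion in Y
  have h4 : (0:ℝ) ≤ ⟪ep, ep⟫ - ⟪ep, dp⟫ + (1/4) * ⟪dp, dp⟫ := by
    have c1 := real_inner_le_norm ep dp
    have c2 : ⟪ep, ep⟫ = ‖ep‖ ^ 2 := real_inner_self_eq_norm_sq ep
    have c3 : ⟪dp, dp⟫ = ‖dp‖ ^ 2 := real_inner_self_eq_norm_sq dp
    nlinarith [sq_nonneg (‖ep‖ - ‖dp‖ / 2)]
  have c3 : ⟪dp, dp⟫ = ‖dp‖ ^ 2 := real_inner_self_eq_norm_sq dp
  simp only [map_sub, inner_sub_left, inner_sub_right]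
  linarith [F1', E1, h3, h4, sQA, sN, sQS, c3]
end
end

section
/- Let ρ ∈ (0,1), c > 0, δ > 0, and let a sequence of nonnegative reals {a_k} satisfy a_{k+1} ≤ ρ a_k + cδ for all k ≥ 0. Fix ε₁ > (2/(1−ρ) + 1)cδ and set ρ̃ = ρ + cδ/(ε₁ − cδ). Then ρ < ρ̃ < (1+ρ)/2 < 1, and: (i) if a_k ≥ ε₁ − cδ then a_{k+1} ≤ ρ̃ a_k; (ii) if a_k < ε₁ − cδ then a_{k+1} < ε₁. Consequently, a_k < ε₁ for all k ≥ ⌈log_{ρ̃}((ε₁ − cδ)/a₀)⌉ + 1 (when a₀ > ε₁ − cδ). -/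
/-- scalar perturbed-contraction argument.  If `a_{k+1} ≤ ρ a_k + cδ`,
`ε₁ > (2/(1−ρ) + 1)cδ` and `ρ̃ = ρ + cδ/(ε₁ − cδ)`, then `ρ < ρ̃ < (1+ρ)/2 < 1`,
(i) `a_k ≥ ε₁ − cδ → a_{k+1} ≤ ρ̃ a_k`, (ii) `a_k < ε₁ − cδ → a_{k+1} < ε₁`, and
`a_k < ε₁` for all `k ≥ ⌈log_{ρ̃}((ε₁ − cδ)/a₀)⌉ + 1` (when `a₀ > ε₁ − cδ`). -/
theorem stmt5 (ρ c δ : ℝ) (hρ₀ : 0 < ρ) (hρ₁ : ρ < 1) (hc : 0 < c) (hδ : 0 < δ)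
    (a : ℕ → ℝ) (ha : ∀ k, 0 ≤ a k)
    (hrec : ∀ k, a (k + 1) ≤ ρ * a k + c * δ)
    (ε₁ : ℝ) (hε₁ : (2 / (1 - ρ) + 1) * (c * δ) < ε₁) :
    ρ < ρ + c * δ / (ε₁ - c * δ) ∧
    ρ + c * δ / (ε₁ - c * δ) < (1 + ρ) / 2 ∧
    (1 + ρ) / 2 < 1 ∧
    (∀ k, ε₁ - c * δ ≤ a k → a (k + 1) ≤ (ρ + c * δ / (ε₁ - c * δ)) * a k) ∧
    (∀ k, a k < ε₁ - c * δ → a (k + 1) < ε₁) ∧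
    (ε₁ - c * δ < a 0 →
      ∀ k : ℕ, ⌈Real.logb (ρ + c * δ / (ε₁ - c * δ)) ((ε₁ - c * δ) / a 0)⌉ + 1 ≤ (k : ℤ) →
        a k < ε₁) := by
  have hcδ : 0 < c * δ := mul_pos hc hδ
  have h1ρ : 0 < 1 - ρ := by linarith
  have h1 : 2 * (c * δ) / (1 - ρ) < ε₁ - c * δ := by
    have e : (2 / (1 - ρ) + 1) * (c * δ) = 2 * (c * δ) / (1 - ρ) + c * δ := by ring
    linarith [hε₁, e.symm.trans_lt hε₁]
  have hL : 0 < ε₁ - c * δ := lt_trans (by positivity) h1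
  have key : 2 * (c * δ) < (ε₁ - c * δ) * (1 - ρ) := (div_lt_iff₀ h1ρ).mp h1
  have hd2 : c * δ / (ε₁ - c * δ) < (1 - ρ) / 2 := by
    rw [div_lt_div_iff₀ hL two_pos]; nlinarith [key]
  have hdpos : 0 < c * δ / (ε₁ - c * δ) := by positivity
  have hrpos : 0 < ρ + c * δ / (ε₁ - c * δ) := by linarith
  have hr1 : ρ + c * δ / (ε₁ - c * δ) < 1 := by linarith
  have hε₁pos : 0 < ε₁ := by linarith
  have hi : ∀ k, ε₁ - c * δ ≤ a k → a (k + 1) ≤ (ρ + c * δ / (ε₁ - c * δ)) * a k := by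
    intro k hk
    have h2 : c * δ ≤ c * δ / (ε₁ - c * δ) * a k := by
      calc c * δ = c * δ / (ε₁ - c * δ) * (ε₁ - c * δ) :=
            (div_mul_cancel₀ _ (ne_of_gt hL)).symm
        _ ≤ c * δ / (ε₁ - c * δ) * a k :=
            mul_le_mul_of_nonneg_left hk (le_of_lt hdpos)
    nlinarith [hrec k]
  have hii : ∀ k, a k < ε₁ - c * δ → a (k + 1) < ε₁ := by
    intro k hk
    nlinarith [hrec k, mul_lt_mul_of_pos_left hk hρ₀]
  refine ⟨by linarith, by linarith, by linarith, hi, hii, ?_⟩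
  intro ha0 k hk
  have ha0pos : 0 < a 0 := lt_trans hL ha0
  have chain : ∀ j n, a j < ε₁ → a (j + n) < ε₁ := by
    intro j n
    induction n with
    | zero => exact fun h => h
    | succ m ih =>
      intro h
      have hm := ih h
      by_cases hc' : a (j + m) < ε₁ - c * δ
      · exact hii (j + m) hc'
      · push_neg at hc'
        have h3 := hi (j + m) hc'
        show a (j + m + 1) < ε₁
        nlinarith [mul_lt_mul_of_pos_left hm hrpos,
          mul_lt_mul_of_pos_right hr1 hε₁pos]
  by_cases hcase : ∃ j, j ≤ k ∧ a j < ε₁ - c * δ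
  · obtain ⟨j, hjk, hj⟩ := hcase
    have hj' : a j < ε₁ := by linarith
    have := chain j (k - j) hj'
    rwa [Nat.add_sub_cancel' hjk] at this
  · push_neg at hcase
    exfalso
    have claimB : ∀ m, (∀ j, j ≤ m → ε₁ - c * δ ≤ a j) →
        a m ≤ (ρ + c * δ / (ε₁ - c * δ)) ^ m * a 0 := by
      intro m
      induction m with
      | zero => intro _; simp
      | succ n ih =>
        intro h
        have hB := ih (fun j hj => h j (hj.trans (Nat.le_succ n)))
        have h2 := hi n (h n (Nat.le_succ n))
        calc a (n + 1) ≤ (ρ + c * δ / (ε₁ - c * δ)) * a n := h2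
          _ ≤ (ρ + c * δ / (ε₁ - c * δ)) * ((ρ + c * δ / (ε₁ - c * δ)) ^ n * a 0) :=
              mul_le_mul_of_nonneg_left hB (le_of_lt hrpos)
          _ = (ρ + c * δ / (ε₁ - c * δ)) ^ (n + 1) * a 0 := by ring
    have hB := claimB k (fun j hj => hcase j hj)
    have hlogk : Real.logb (ρ + c * δ / (ε₁ - c * δ)) ((ε₁ - c * δ) / a 0) < (k : ℝ) := by
      have h1' := Int.le_ceil (Real.logb (ρ + c * δ / (ε₁ - c * δ)) ((ε₁ - c * δ) / a 0))
      have h2' : (⌈Real.logb (ρ + c * δ / (ε₁ - c * δ)) ((ε₁ - c * δ) / a 0)⌉ : ℝ) + 1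
          ≤ (k : ℝ) := by exact_mod_cast hk
      linarith
    have hpow : (ρ + c * δ / (ε₁ - c * δ)) ^ k < (ε₁ - c * δ) / a 0 := by
      have h3 := Real.rpow_lt_rpow_of_exponent_gt hrpos hr1 hlogk
      rw [Real.rpow_logb hrpos (ne_of_lt hr1) (by positivity)] at h3
      calc (ρ + c * δ / (ε₁ - c * δ)) ^ k
          = (ρ + c * δ / (ε₁ - c * δ)) ^ ((k : ℕ) : ℝ) := (Real.rpow_natCast _ _).symm
        _ < _ := h3
    have h4 : (ρ + c * δ / (ε₁ - c * δ)) ^ k * a 0 < ε₁ - c * δ := by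
      have := mul_lt_mul_of_pos_right hpow ha0pos
      rwa [div_mul_cancel₀ _ (ne_of_gt ha0pos)] at this
    linarith [hcase k le_rfl]
end

section
/- Let a ≤ 0 ≤ b be real numbers, β ≥ 0, λ > 0, τ ≥ 0, and define ψ(r) = β|r| + I_{[a,b]}(r) on ℝ. Then for every s ∈ ℝ, the resolvent ((λ+τ) + ∂ψ)⁻¹(s) equals proj_{[a,b]}( [(|s| − β)/(λ+τ)]₊ · sgn(s) ), and this value admits the ReLU representation b − σ(b − a − σ(σ((s − β)/(λ+τ)) − σ((−s − β)/(λ+τ)) − a)), where σ(r) = max{0, r} and [r]₊ = max{0,r}. -/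
/-- for `ψ(r) = β|r| + I_{[a,b]}(r)` with `a ≤ 0 ≤ b`, `β ≥ 0`,
`λ > 0`, `τ ≥ 0`, the resolvent `((λ+τ) + ∂ψ)⁻¹(s)` — i.e. the unique minimizer
over `r ∈ [a,b]` of `(λ+τ)/2 · r² − s r + β|r|` — equals
`proj_{[a,b]}([(|s| − β)/(λ+τ)]₊ · sgn(s))`, and this value admits the ReLU
representation
`b − σ(b − a − σ(σ((s−β)/(λ+τ)) − σ((−s−β)/(λ+τ)) − a))` with `σ(r) = max 0 r`. -/
theorem stmt10 (a b β lam τ : ℝ)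
    (ha : a ≤ 0) (hb : 0 ≤ b) (hβ : 0 ≤ β) (hlam : 0 < lam) (hτ : 0 ≤ τ) (s : ℝ) :
    let σ : ℝ → ℝ := fun r => max 0 r
    let t : ℝ := min b (max a (σ ((|s| - β) / (lam + τ)) * Real.sign s))
    -- `t` is the resolvent: it lies in `[a,b]` and minimizes the objective there
    (a ≤ t ∧ t ≤ b) ∧
    (∀ r : ℝ, a ≤ r → r ≤ b →
      (lam + τ) / 2 * t ^ 2 - s * t + β * |t|
        ≤ (lam + τ) / 2 * r ^ 2 - s * r + β * |r|) ∧
    (∀ r : ℝ, a ≤ r → r ≤ b →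
      (lam + τ) / 2 * r ^ 2 - s * r + β * |r|
        = (lam + τ) / 2 * t ^ 2 - s * t + β * |t| → r = t) ∧
    -- ReLU representation
    t = b - σ (b - a - σ (σ ((s - β) / (lam + τ)) - σ ((-s - β) / (lam + τ)) - a)) := by
  intro σ t
  have hσ : ∀ x, σ x = max 0 x := fun _ => rfl
  have hc : (0:ℝ) < lam + τ := by linarith
  have hab : a ≤ b := ha.trans hb
  set u : ℝ := max 0 ((|s| - β) / (lam + τ)) * Real.sign s with hu
  have ht : t = min b (max a u) := rfl
  clear_value σ t
  have hta : a ≤ t := by rw [ht]; exact le_min hab (le_max_left _ _)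
  have htb : t ≤ b := by rw [ht]; exact min_le_left _ _
  have hkey : ∀ r, a ≤ r → r ≤ b →
      0 ≤ ((lam + τ) * t - s) * (r - t) + β * (|r| - |t|) := by
    intro r har hrb
    rcases le_or_gt |s| β with hsβ | hsβ
    · have hd : (|s| - β) / (lam + τ) ≤ 0 :=
        div_nonpos_of_nonpos_of_nonneg (by linarith) hc.le
      have hu0 : u = 0 := by rw [hu, max_eq_left hd, zero_mul]
      have ht0 : t = 0 := by rw [ht, hu0, max_eq_right ha, min_eq_right hb]
      have h1 : s * r ≤ |s| * |r| := (le_abs_self _).trans (abs_mul s r).le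
      rw [ht0]
      simp only [abs_zero]
      nlinarith [abs_nonneg r]
    · rcases le_or_gt 0 s with hs | hs
      · have hs' : β < s := by rwa [abs_of_nonneg hs] at hsβ
        have hspos : 0 < s := lt_of_le_of_lt hβ hs'
        have huv : u = (s - β) / (lam + τ) := by
          rw [hu, Real.sign_of_pos hspos, abs_of_nonneg hs, mul_one,
            max_eq_right (div_nonneg (by linarith) hc.le)]
        have hu0 : 0 ≤ u := by rw [huv]; exact div_nonneg (by linarith) hc.le
        have hmax : max a u = u := max_eq_right (ha.trans hu0)
        have hcu : (lam + τ) * u = s - β := by rw [huv]; field_simp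
        rcases le_total u b with h1 | h1
        · have ht' : t = u := by rw [ht, hmax, min_eq_right h1]
          rw [ht', abs_of_nonneg hu0]
          nlinarith [le_abs_self r]
        · have ht' : t = b := by rw [ht, hmax, min_eq_left h1]
          rw [ht', abs_of_nonneg hb]
          nlinarith [mul_nonneg hβ (sub_nonneg.mpr (le_abs_self r)),
            mul_nonneg (sub_nonneg.mpr (mul_le_mul_of_nonneg_left h1 hc.le))
              (sub_nonneg.mpr hrb)]
      · have hs' : s < -β := by
          have := abs_of_neg hs; nlinarith [hsβ, this]
        have huv : u = (s + β) / (lam + τ) := by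
          rw [hu, Real.sign_of_neg hs, abs_of_neg hs,
            max_eq_right (div_nonneg (by linarith) hc.le)]
          ring
        have hu0 : u ≤ 0 := by
          rw [huv]; exact div_nonpos_of_nonpos_of_nonneg (by linarith) hc.le
        have hmin : min b (max a u) = max a u :=
          min_eq_right (max_le hab (hu0.trans hb))
        have hcu : (lam + τ) * u = s + β := by rw [huv]; field_simp
        rcases le_total a u with h1 | h1
        · have ht' : t = u := by rw [ht, hmin, max_eq_right h1]
          rw [ht', abs_of_nonpos hu0]
          nlinarith [neg_abs_le r]
        · have ht' : t = a := by rw [ht, hmin, max_eq_left h1]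
          rw [ht', abs_of_nonpos ha]
          nlinarith [mul_nonneg hβ (sub_nonneg.mpr (neg_abs_le r)),
            mul_nonneg (sub_nonneg.mpr (mul_le_mul_of_nonneg_left h1 hc.le))
              (sub_nonneg.mpr har)]
  refine ⟨⟨hta, htb⟩, ?_, ?_, ?_⟩
  · intro r har hrb
    nlinarith [hkey r har hrb, mul_nonneg hc.le (sq_nonneg (r - t))]
  · intro r har hrb heq
    have hk := hkey r har hrb
    have hid : (lam + τ) * (r - t) ^ 2
        = 2 * ((lam + τ) / 2 * r ^ 2 - s * r + β * |r|)
          - 2 * ((lam + τ) / 2 * t ^ 2 - s * t + β * |t|)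
          - 2 * (((lam + τ) * t - s) * (r - t) + β * (|r| - |t|)) := by ring
    have h4 : (lam + τ) * (r - t) ^ 2 ≤ 0 := by rw [hid, heq]; linarith
    have h5 : (r - t) ^ 2 ≤ 0 := by
      by_contra h
      push_neg at h
      nlinarith [mul_pos hc h]
    have h3 : r - t = 0 := sq_eq_zero_iff.mp (le_antisymm h5 (sq_nonneg _))
    linarith
  · have huv : u = max 0 ((s - β) / (lam + τ)) - max 0 ((-s - β) / (lam + τ)) := by
      rcases lt_trichotomy s 0 with hs | hs | hs
      · rw [hu, Real.sign_of_neg hs, abs_of_neg hs,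
          max_eq_left (div_nonpos_of_nonpos_of_nonneg (show s - β ≤ 0 by linarith) hc.le)]
        ring
      · subst hs
        simp [hu, Real.sign_zero]
      · rw [hu, Real.sign_of_pos hs, abs_of_pos hs,
          max_eq_left (div_nonpos_of_nonpos_of_nonneg (show -s - β ≤ 0 by linarith) hc.le)]
        ring
    rw [ht, huv]
    simp only [hσ]
    set x : ℝ := max 0 ((s - β) / (lam + τ)) - max 0 ((-s - β) / (lam + τ)) with hx
    clear_value x
    have h1 : max 0 (x - a) = max a x - a := by
      rcases le_total a x with h | h
      · rw [max_eq_right h, max_eq_right (by linarith : (0:ℝ) ≤ x - a)]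
      · rw [max_eq_left h, max_eq_left (by linarith : x - a ≤ (0:ℝ))]; ring
    rw [h1]
    rcases le_total (max a x) b with h | h
    · rw [min_eq_right h,
        show b - a - (max a x - a) = b - max a x by ring,
        max_eq_right (by linarith : (0:ℝ) ≤ b - max a x)]
      ring
    · rw [min_eq_left h,
        show b - a - (max a x - a) = b - max a x by ring,
        max_eq_left (by linarith : b - max a x ≤ (0:ℝ))]
      ring
end
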